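/- Let q = p^e > 2 be a prime power, r ≥ 1 a divisor of 2e, λ ∈ F* with λ^{p^{tr}} = λ^q for some 0 ≤ t < 2e/r, and k = k_{r,λ}(q). A flag (⟨u₂⟩, L₂) ∈ V(q) is adjacent to (0, L*) in Γ_{r,λ}(q) if and only if there exist an integer 0 ≤ i < k and f, g, h ∈ F* with g + g^q = f^{q+1} such that (i) u₂ is a scalar multiple of (fh, h, gh), and (ii) L₂ is the set of absolute points ⟨x,y,z⟩ satisfying (λ^{q p^{ir}} − f^{q+1} h)x − f(λ^{q p^{ir}} − g^q h)y + fhz = 0. -/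

import Mathlib

namespace UnitaryGraphPaper

variable (F : Type) [Field F]

/-- The Hermitian form β((x₁,y₁,z₁),(x₂,y₂,z₂)) = −x₁x₂^q + y₁z₂^q + z₁y₂^q. -/
def beta (q : ℕ) (u v : F × F × F) : F :=
  -(u.1 * v.1 ^ q) + u.2.1 * v.2.2 ^ q + u.2.2 * v.2.1 ^ q

/-- A vector is isotropic if β(u,u) = 0. -/
def Isotropic (q : ℕ) (u : F × F × F) : Prop := beta F q u u = 0

/-- Absolute points: 1-dimensional subspaces spanned by nonzero isotropic vectors. -/
def IsAbsolutePoint (q : ℕ) (P : Submodule F (F × F × F)) : Prop :=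
  ∃ u : F × F × F, u ≠ 0 ∧ Isotropic F q u ∧ P = Submodule.span F {u}

/-- Lines of the Hermitian unital: sets of absolute points contained in a 2-dimensional
subspace spanned by two linearly independent isotropic vectors. -/
def IsUnitalLine (q : ℕ) (l : Set (Submodule F (F × F × F))) : Prop :=
  ∃ u v : F × F × F, Isotropic F q u ∧ Isotropic F q v ∧ LinearIndependent F ![u, v] ∧
    l = {P | IsAbsolutePoint F q P ∧ P ≤ Submodule.span F ({u, v} : Set (F × F × F))}

/-- Flags of the Hermitian unital: incident point-line pairs. -/
def Flag (q : ℕ) : Type :=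
  {Pl : Submodule F (F × F × F) × Set (Submodule F (F × F × F)) //
    IsAbsolutePoint F q Pl.1 ∧ IsUnitalLine F q Pl.2 ∧ Pl.1 ∈ Pl.2}

/-- The set of absolute points ⟨x,y,z⟩ for which the determinant of the 3×3 matrix with
columns (x,y,z), u, w vanishes. -/
def detLine (q : ℕ) (u w : F × F × F) : Set (Submodule F (F × F × F)) :=
  {P | ∃ v : F × F × F, v ≠ 0 ∧ Isotropic F q v ∧ P = Submodule.span F {v} ∧
    (!![v.1, u.1, w.1; v.2.1, u.2.1, w.2.1; v.2.2, u.2.2, w.2.2] : Matrix (Fin 3) (Fin 3) F).det = 0}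

/-- The defining adjacency condition of the unitary graph Γ_{r,λ}(q), q = p^e. -/
def AdjCond (p q e r : ℕ) (lam : F) (v₁ v₂ : Flag F q) : Prop :=
  ∃ i : ℕ, i < 2 * e / r ∧ ∃ u₁ u₂ u₀ : F × F × F,
    u₁ ≠ 0 ∧ Isotropic F q u₁ ∧ v₁.1.1 = Submodule.span F {u₁} ∧
    u₂ ≠ 0 ∧ Isotropic F q u₂ ∧ v₂.1.1 = Submodule.span F {u₂} ∧
    ¬ Isotropic F q u₀ ∧ beta F q u₀ u₁ = 0 ∧ beta F q u₀ u₂ = 0 ∧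
    v₁.1.2 = detLine F q u₁ (u₀ + u₂) ∧
    v₂.1.2 = detLine F q u₂ (u₀ + lam ^ (q * p ^ (i * r)) • u₁)

/-- The unitary graph Γ_{r,λ}(q). -/
def unitaryGraph (p q e r : ℕ) (lam : F) : SimpleGraph (Flag F q) :=
  SimpleGraph.fromRel (AdjCond F p q e r lam)

/-- The absolute point ∞ = ⟨0,1,0⟩. -/
def ptInfty : Submodule F (F × F × F) := Submodule.span F {((0 : F), 1, 0)}

/-- The absolute point 0 = ⟨0,0,1⟩. -/
def ptZero : Submodule F (F × F × F) := Submodule.span F {((0 : F), 0, 1)}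

/-- The line L*: absolute points ⟨x,y,z⟩ with x = 0. -/
def lineLstar (q : ℕ) : Set (Submodule F (F × F × F)) :=
  {P | ∃ v : F × F × F, v ≠ 0 ∧ Isotropic F q v ∧ P = Submodule.span F {v} ∧ v.1 = 0}

/-- The line L: absolute points ⟨x,y,z⟩ with x = z. -/
def lineL (q : ℕ) : Set (Submodule F (F × F × F)) :=
  {P | ∃ v : F × F × F, v ≠ 0 ∧ Isotropic F q v ∧ P = Submodule.span F {v} ∧ v.1 = v.2.2}

/-- The line N(η): absolute points ⟨x,y,z⟩ with y = ηx. -/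
def lineN (q : ℕ) (eta : F) : Set (Submodule F (F × F × F)) :=
  {P | ∃ v : F × F × F, v ≠ 0 ∧ Isotropic F q v ∧ P = Submodule.span F {v} ∧ v.2.1 = eta * v.1}

/-- The line given by the homogenous equation A x + B y + C z = 0 (as a set of absolute
points). -/
def eqnLine (q : ℕ) (A B C : F) : Set (Submodule F (F × F × F)) :=
  {P | ∃ v : F × F × F, v ≠ 0 ∧ Isotropic F q v ∧ P = Submodule.span F {v} ∧
    A * v.1 + B * v.2.1 + C * v.2.2 = 0}

/-- Common neighbours of two vertices in a graph. -/
def commonNbrs {V : Type} (G : SimpleGraph V) (a b : V) : Set V :=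
  {c | G.Adj a c ∧ G.Adj b c}

section Helpers
variable {F} {q : ℕ}

lemma det3_formula (v u w : F × F × F) :
    (!![v.1, u.1, w.1; v.2.1, u.2.1, w.2.1; v.2.2, u.2.2, w.2.2] :
      Matrix (Fin 3) (Fin 3) F).det =
    (u.2.1 * w.2.2 - u.2.2 * w.2.1) * v.1 + (u.2.2 * w.1 - u.1 * w.2.2) * v.2.1 +
      (u.1 * w.2.1 - u.2.1 * w.1) * v.2.2 := by
  simp [Matrix.det_fin_three]; ring

lemma lineSet_congr {c₁ c₂ : F × F × F → Prop}
    (h : ∀ v : F × F × F, v ≠ 0 → Isotropic F q v → (c₁ v ↔ c₂ v)) :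
    {P : Submodule F (F × F × F) | ∃ v, v ≠ 0 ∧ Isotropic F q v ∧ P = Submodule.span F {v} ∧ c₁ v}
      = {P : Submodule F (F × F × F) | ∃ v, v ≠ 0 ∧ Isotropic F q v ∧ P = Submodule.span F {v} ∧ c₂ v} := by
  ext P
  constructor
  · rintro ⟨v, h0, hi, hP, hc⟩; exact ⟨v, h0, hi, hP, (h v h0 hi).mp hc⟩
  · rintro ⟨v, h0, hi, hP, hc⟩; exact ⟨v, h0, hi, hP, (h v h0 hi).mpr hc⟩

lemma detLine_eq_eqnLine (u w : F × F × F) :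
    detLine F q u w = eqnLine F q (u.2.1 * w.2.2 - u.2.2 * w.2.1)
      (u.2.2 * w.1 - u.1 * w.2.2) (u.1 * w.2.1 - u.2.1 * w.1) := by
  unfold detLine eqnLine
  apply lineSet_congr
  intro v _ _
  rw [det3_formula]

lemma eqnLine_scale {A B C s : F} (hs : s ≠ 0) :
    eqnLine F q (s * A) (s * B) (s * C) = eqnLine F q A B C := by
  unfold eqnLine
  apply lineSet_congr
  intro v _ _
  constructor
  · intro h
    have h2 : s * (A * v.1 + B * v.2.1 + C * v.2.2) = 0 := by linear_combination h
    exact (mul_eq_zero.mp h2).resolve_left hs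
  · intro h; linear_combination s * h

lemma eqnLine_eq_of {A B C A' B' C' : F} (s : F) (hs : s ≠ 0)
    (h1 : A = s * A') (h2 : B = s * B') (h3 : C = s * C') :
    eqnLine F q A B C = eqnLine F q A' B' C' := by
  rw [h1, h2, h3, eqnLine_scale hs]

lemma lineLstar_eq_eqnLine : lineLstar F q = eqnLine F q 1 0 0 := by
  unfold lineLstar eqnLine
  apply lineSet_congr
  intro v _ _
  constructor
  · intro h; rw [h]; ring
  · intro h; linear_combination h

lemma mem_eqnLine_of {x : F × F × F} (hx0 : x ≠ 0) (hxi : Isotropic F q x) {A B C : F}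
    (h : A * x.1 + B * x.2.1 + C * x.2.2 = 0) :
    Submodule.span F {x} ∈ eqnLine F q A B C := ⟨x, hx0, hxi, rfl, h⟩

lemma smul_fst (s : F) (x : F × F × F) : (s • x).1 = s * x.1 := rfl
lemma smul_snd_fst (s : F) (x : F × F × F) : (s • x).2.1 = s * x.2.1 := rfl
lemma smul_snd_snd (s : F) (x : F × F × F) : (s • x).2.2 = s * x.2.2 := rfl

lemma span_eq_imp {x v : F × F × F} (hv0 : v ≠ 0)
    (h : Submodule.span F {x} = Submodule.span F {v}) : ∃ s : F, s ≠ 0 ∧ v = s • x := by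
  have hvx : v ∈ Submodule.span F {x} := h ▸ Submodule.mem_span_singleton_self v
  obtain ⟨s, hs⟩ := Submodule.mem_span_singleton.mp hvx
  refine ⟨s, ?_, hs.symm⟩
  rintro rfl
  rw [← hs] at hv0
  simp at hv0

lemma eq_of_mem_eqnLine {x : F × F × F} (hx0 : x ≠ 0) {A B C : F}
    (h : Submodule.span F {x} ∈ eqnLine F q A B C) :
    A * x.1 + B * x.2.1 + C * x.2.2 = 0 := by
  obtain ⟨v, hv0, -, hP, hc⟩ := h
  obtain ⟨s, hs0, rfl⟩ := span_eq_imp hv0 hP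
  rw [smul_fst, smul_snd_fst, smul_snd_snd] at hc
  have h2 : s * (A * x.1 + B * x.2.1 + C * x.2.2) = 0 := by linear_combination hc
  exact (mul_eq_zero.mp h2).resolve_left hs0

lemma exists_trace_ne (q : ℕ) [Fintype F] (hq1 : 1 < q) (hcard : q < Fintype.card F) :
    ∃ y : F, y + y ^ q ≠ 0 := by
  classical
  by_contra hcon
  push_neg at hcon
  set P : Polynomial F := Polynomial.X ^ q + Polynomial.X with hP
  have hdeg : P.natDegree = q := by
    rw [hP, Polynomial.natDegree_add_eq_left_of_natDegree_lt] <;>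
      simp [Polynomial.natDegree_X_pow, Polynomial.natDegree_X] <;> omega
  have hPne : P ≠ 0 := by
    intro h0; rw [h0] at hdeg; simp at hdeg; omega
  have hsub : (Finset.univ : Finset F) ⊆ P.roots.toFinset := by
    intro y _
    refine Multiset.mem_toFinset.mpr (Polynomial.mem_roots'.mpr ⟨hPne, ?_⟩)
    simp [hP, Polynomial.IsRoot]
    linear_combination hcon y
  have h1 := Finset.card_le_card hsub
  have h2 := Multiset.toFinset_card_le P.roots
  have h3 := Polynomial.card_roots' P
  rw [hdeg] at h3
  simp only [Finset.card_univ] at h1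
  omega

lemma pow_mod_lemma (lam : F) (p q r k : ℕ) (hk : 0 < k) (hkfix : lam ^ p ^ (k * r) = lam) :
    ∀ i, lam ^ (q * p ^ (i * r)) = lam ^ (q * p ^ ((i % k) * r)) := by
  intro i
  induction i using Nat.strong_induction_on with
  | _ i ih =>
    rcases lt_or_ge i k with h | h
    · rw [Nat.mod_eq_of_lt h]
    · have hle : k * r ≤ i * r := Nat.mul_le_mul_right r h
      have e : i * r = k * r + (i - k) * r := by
        rw [Nat.sub_mul, Nat.add_sub_cancel' hle]
      have e2 : lam ^ (q * p ^ (i * r)) = lam ^ (q * p ^ ((i - k) * r)) := by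
        rw [e, pow_add]
        rw [show q * (p ^ (k * r) * p ^ ((i - k) * r)) = p ^ (k * r) * (q * p ^ ((i - k) * r)) by ring]
        rw [pow_mul, hkfix]
      rw [e2, ih (i - k) (by omega), Nat.mod_eq_sub_mod h]

end Helpers


set_option maxHeartbeats 1600000 in
theorem stmt10 (F : Type) [Field F] [Fintype F] (p q e r : ℕ)
    (hp : p.Prime) (he : 0 < e) (hq : q = p ^ e) (hq2 : 2 < q)
    (hr : 0 < r) (hre : r ∣ 2 * e) (hF : Fintype.card F = q ^ 2)
    (lam : F) (hlam : lam ≠ 0)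
    (hlamq : ∃ t : ℕ, t < 2 * e / r ∧ lam ^ p ^ (t * r) = lam ^ q)
    (k : ℕ) (hk : 0 < k) (hkfix : lam ^ p ^ (k * r) = lam)
    (hkmin : ∀ j : ℕ, 0 < j → lam ^ p ^ (j * r) = lam → k ≤ j)
    (vL w : Flag F q) (hvL : vL.1 = (ptZero F, lineLstar F q)) :
    (unitaryGraph F p q e r lam).Adj vL w ↔
      ∃ i < k, ∃ f g h : F, f ≠ 0 ∧ g ≠ 0 ∧ h ≠ 0 ∧ g + g ^ q = f ^ (q + 1) ∧
        w.1.1 = Submodule.span F {(f * h, h, g * h)} ∧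
        w.1.2 = eqnLine F q (lam ^ (q * p ^ (i * r)) - f ^ (q + 1) * h)
          (-(f * (lam ^ (q * p ^ (i * r)) - g ^ q * h))) (f * h) := by
  have hq0 : q ≠ 0 := by omega
  have hq1 : 1 < q := by omega
  have hvP : vL.1.1 = ptZero F := by rw [hvL]
  have hvLine : vL.1.2 = lineLstar F q := by rw [hvL]
  -- k ≤ 2e/r
  have h2er : 0 < 2 * e / r := Nat.div_pos (Nat.le_of_dvd (by omega) hre) hr
  have hkle : k ≤ 2 * e / r := by
    apply hkmin _ h2er
    rw [Nat.div_mul_cancel hre]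
    rw [show p ^ (2 * e) = q ^ 2 by rw [hq, ← pow_mul, mul_comm e 2], ← hF]
    exact FiniteField.pow_card lam
  -- the special absolute point with nonzero first coordinate
  have hcardq : q < Fintype.card F := by rw [hF, pow_two]; nlinarith
  haveI hfact : Fact p.Prime := ⟨hp⟩
  have hchar : CharP F p := by
    obtain ⟨n, hn, hcard⟩ := FiniteField.card F (ringChar F)
    have hdvd : p ∣ ringChar F ^ (n : ℕ) := by
      rw [← hcard, hF, hq, ← pow_mul]
      exact dvd_pow_self p (by positivity)
    rw [(Nat.prime_dvd_prime_iff_eq hp hn).mp (hp.dvd_of_dvd_pow hdvd)]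
    exact ringChar.charP F
  haveI := hchar
  have hfrob : ∀ a b : F, (a + b) ^ q = a ^ q + b ^ q := by
    intro a b; rw [hq]; exact add_pow_char_pow a b p e
  have hpc : ∀ a : F, (a ^ q) ^ q = a := by
    intro a
    rw [← pow_mul, show q * q = q ^ 2 from (pow_two q).symm, ← hF]
    exact FiniteField.pow_card a
  obtain ⟨y₀, hy₀⟩ := exists_trace_ne (F := F) q hq1 hcardq
  have hs : (y₀ + y₀ ^ q) ^ q = y₀ + y₀ ^ q := by rw [hfrob, hpc, add_comm]
  set yy : F := y₀ * (y₀ + y₀ ^ q)⁻¹ with hyydef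
  have hyy : yy + yy ^ q = 1 := by
    rw [hyydef, mul_pow, inv_pow, hs, ← add_mul, mul_inv_cancel₀ hy₀]
  have hvecP0 : (((1 : F), yy, 1) : F × F × F) ≠ 0 := by simp [Prod.mk_eq_zero]
  have hvecPiso : Isotropic F q (((1 : F), yy, 1) : F × F × F) := by
    simp only [Isotropic, beta]
    simp only [one_pow]
    linear_combination hyy
  have hInf0 : (((0 : F), 1, 0) : F × F × F) ≠ 0 := by simp [Prod.mk_eq_zero]
  have hInfiso : Isotropic F q (((0 : F), 1, 0) : F × F × F) := by
    simp [Isotropic, beta, zero_pow hq0]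
  show (SimpleGraph.fromRel (AdjCond F p q e r lam)).Adj vL w ↔ _
  rw [SimpleGraph.fromRel_adj]
  constructor
  · rintro ⟨hne, hadj | hadj⟩
    · obtain ⟨i, hi2er, u₁, u₂, u₀, h10, h1iso, h1span, h20, h2iso, h2span, h0niso, hb01, hb02, hL1, hL2⟩ := hadj
      obtain ⟨c, hc0, hu1⟩ := span_eq_imp h10 (hvP.symm.trans h1span)
      have hu1' : u₁ = ((0:F), 0, c) := by rw [hu1]; simp [Prod.smul_mk, smul_eq_mul]
      subst hu1'
      have hb0 : u₀.2.1 = 0 := by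
        simp only [beta, zero_pow hq0, mul_zero, zero_mul, neg_zero, zero_add, add_zero] at hb01
        exact (mul_eq_zero.mp hb01).resolve_right (pow_ne_zero _ hc0)
      have ha00 : u₀.1 ≠ 0 := by
        intro hz
        apply h0niso
        simp only [Isotropic, beta, hz, hb0]
        simp [zero_pow hq0]
      have hLl := hvLine.symm.trans hL1
      rw [lineLstar_eq_eqnLine, detLine_eq_eqnLine] at hLl
      simp only [Prod.fst_add, Prod.snd_add, hb0] at hLl
      have hmem1 : Submodule.span F {(((0:F),1,0) : F × F × F)} ∈ eqnLine F q 1 0 0 :=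
        mem_eqnLine_of hInf0 hInfiso (by norm_num)
      rw [hLl] at hmem1
      have heq1 := eq_of_mem_eqnLine hInf0 hmem1
      norm_num at heq1
      have hsum : u₀.1 + u₂.1 = 0 := by
        rcases heq1 with h' | h'
        · exact absurd h' hc0
        · exact h'
      have hb2 : u₂.2.1 ≠ 0 := by
        intro hbz
        have hmemP : Submodule.span F {(((1:F), yy, 1) : F × F × F)} ∈ eqnLine F q
            (0 * (u₀.2.2 + u₂.2.2) - c * (0 + u₂.2.1)) (c * (u₀.1 + u₂.1) - 0 * (u₀.2.2 + u₂.2.2))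
            (0 * (0 + u₂.2.1) - 0 * (u₀.1 + u₂.1)) :=
          mem_eqnLine_of hvecP0 hvecPiso (by
            norm_num
            linear_combination (-c) * hbz + (c * yy) * hsum)
        rw [← hLl] at hmemP
        have hx := eq_of_mem_eqnLine hvecP0 hmemP
        norm_num at hx
      have ha2 : u₂.1 ≠ 0 := by
        intro hz; apply ha00; linear_combination hsum - hz
      have hR1 : u₂.1 * u₂.1 ^ q + u₀.2.2 * u₂.2.1 ^ q = 0 := by
        simp only [beta] at hb02
        linear_combination hb02 + u₂.1 ^ q * hsum - u₂.2.2 ^ q * hb0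
      have hR2 := h2iso
      simp only [Isotropic, beta] at hR2
      have hfg : u₂.2.2 * u₂.2.1⁻¹ + (u₂.2.2 * u₂.2.1⁻¹) ^ q = (u₂.1 * u₂.2.1⁻¹) ^ (q + 1) := by
        rw [mul_pow, mul_pow, inv_pow, inv_pow]
        field_simp
        linear_combination (u₂.2.1 ^ (q + 1)) * hR2
      have hf0 : u₂.1 * u₂.2.1⁻¹ ≠ 0 := mul_ne_zero ha2 (inv_ne_zero hb2)
      have hg0 : u₂.2.2 * u₂.2.1⁻¹ ≠ 0 := by
        intro hgz
        have hfz : (u₂.1 * u₂.2.1⁻¹) ^ (q + 1) = 0 := by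
          rw [← hfg, hgz, zero_pow hq0, add_zero]
        exact hf0 ((pow_eq_zero_iff (show q + 1 ≠ 0 by omega)).mp hfz)
      have hmu := pow_mod_lemma lam p q r k hk hkfix i
      refine ⟨i % k, Nat.mod_lt _ hk, u₂.1 * u₂.2.1⁻¹, u₂.2.2 * u₂.2.1⁻¹, u₂.2.1 * c⁻¹,
        hf0, hg0, mul_ne_zero hb2 (inv_ne_zero hc0), hfg, ?_, ?_⟩
      · rw [h2span]
        have hvec : ((u₂.1 * u₂.2.1⁻¹) * (u₂.2.1 * c⁻¹), u₂.2.1 * c⁻¹,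
            (u₂.2.2 * u₂.2.1⁻¹) * (u₂.2.1 * c⁻¹)) = c⁻¹ • u₂ := by
          refine Prod.ext_iff.mpr ⟨?_, Prod.ext_iff.mpr ⟨?_, ?_⟩⟩
          · rw [smul_fst]; field_simp
          · rw [smul_snd_fst]; field_simp
          · rw [smul_snd_snd]; field_simp
        rw [hvec, Submodule.span_singleton_smul_eq (IsUnit.mk0 _ (inv_ne_zero hc0)) u₂]
      · rw [hL2, detLine_eq_eqnLine, ← hmu]
        refine eqnLine_eq_of (u₂.2.1 * c) (mul_ne_zero hb2 hc0) ?_ ?_ ?_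
        · simp only [Prod.fst_add, Prod.snd_add, Prod.smul_mk, smul_eq_mul, hb0,
            mul_zero, add_zero, zero_add]
          rw [mul_pow, inv_pow]
          field_simp
          linear_combination (u₂.2.1 ^ 2) * hR1
        · simp only [Prod.fst_add, Prod.snd_add, Prod.smul_mk, smul_eq_mul, hb0,
            mul_zero, add_zero, zero_add]
          rw [mul_pow, inv_pow]
          field_simp
          linear_combination (u₂.2.2 * u₂.2.1 ^ q) * hsum - (u₂.1) * hR2
            - (u₂.1) * hR1
        · simp only [Prod.fst_add, Prod.snd_add, Prod.smul_mk, smul_eq_mul, hb0,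
            mul_zero, add_zero, zero_add]
          field_simp
          linear_combination (-(u₂.2.1)) * hsum
    · obtain ⟨i, hi2er, u₁, u₂, u₀, h10, h1iso, h1span, h20, h2iso, h2span, h0niso, hb01, hb02, hL1, hL2⟩ := hadj
      obtain ⟨c, hc0, hu2⟩ := span_eq_imp h20 (hvP.symm.trans h2span)
      have hu2' : u₂ = ((0:F), 0, c) := by rw [hu2]; simp [Prod.smul_mk, smul_eq_mul]
      subst hu2'
      have hb0 : u₀.2.1 = 0 := by
        simp only [beta, zero_pow hq0, mul_zero, zero_mul, neg_zero, zero_add, add_zero] at hb02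
        exact (mul_eq_zero.mp hb02).resolve_right (pow_ne_zero _ hc0)
      have ha00 : u₀.1 ≠ 0 := by
        intro hz
        apply h0niso
        simp only [Isotropic, beta, hz, hb0]
        simp [zero_pow hq0]
      have hmu0 : lam ^ (q * p ^ (i * r)) ≠ 0 := pow_ne_zero _ hlam
      have hmu00 : lam ^ (q * p ^ (0 * r)) ≠ 0 := pow_ne_zero _ hlam
      have hLl := hvLine.symm.trans hL2
      rw [lineLstar_eq_eqnLine, detLine_eq_eqnLine] at hLl
      simp only [Prod.fst_add, Prod.snd_add, smul_fst, smul_snd_fst, smul_snd_snd, hb0] at hLl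
      have hmem1 : Submodule.span F {(((0:F),1,0) : F × F × F)} ∈ eqnLine F q 1 0 0 :=
        mem_eqnLine_of hInf0 hInfiso (by norm_num)
      rw [hLl] at hmem1
      have heq1 := eq_of_mem_eqnLine hInf0 hmem1
      norm_num at heq1
      have hsum : u₀.1 + lam ^ (q * p ^ (i * r)) * u₁.1 = 0 := by
        rcases heq1 with h' | h'
        · exact absurd h' hc0
        · exact h'
      have hb1 : u₁.2.1 ≠ 0 := by
        intro hbz
        have hmemP : Submodule.span F {(((1:F), yy, 1) : F × F × F)} ∈ eqnLine F q
            (0 * (u₀.2.2 + lam ^ (q * p ^ (i * r)) * u₁.2.2) - c * (0 + lam ^ (q * p ^ (i * r)) * u₁.2.1))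
            (c * (u₀.1 + lam ^ (q * p ^ (i * r)) * u₁.1) - 0 * (u₀.2.2 + lam ^ (q * p ^ (i * r)) * u₁.2.2))
            (0 * (0 + lam ^ (q * p ^ (i * r)) * u₁.2.1) - 0 * (u₀.1 + lam ^ (q * p ^ (i * r)) * u₁.1)) :=
          mem_eqnLine_of hvecP0 hvecPiso (by
            norm_num
            linear_combination (-(c * lam ^ (q * p ^ (i * r)))) * hbz + (c * yy) * hsum)
        rw [← hLl] at hmemP
        have hx := eq_of_mem_eqnLine hvecP0 hmemP
        norm_num at hx
      have ha1 : u₁.1 ≠ 0 := by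
        intro hz
        apply ha00
        have h2 := hsum
        rw [hz, mul_zero, add_zero] at h2
        exact h2
      have hR1 : u₀.2.2 * u₁.2.1 ^ q = u₀.1 * u₁.1 ^ q := by
        simp only [beta] at hb01
        linear_combination hb01 - u₁.2.2 ^ q * hb0
      have hR2 := h1iso
      simp only [Isotropic, beta] at hR2
      have hfg : u₁.2.2 * u₁.2.1⁻¹ + (u₁.2.2 * u₁.2.1⁻¹) ^ q = (u₁.1 * u₁.2.1⁻¹) ^ (q + 1) := by
        rw [mul_pow, mul_pow, inv_pow, inv_pow]
        field_simp
        linear_combination (u₁.2.1 ^ (q + 1)) * hR2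
      have hf0 : u₁.1 * u₁.2.1⁻¹ ≠ 0 := mul_ne_zero ha1 (inv_ne_zero hb1)
      have hg0 : u₁.2.2 * u₁.2.1⁻¹ ≠ 0 := by
        intro hgz
        have hfz : (u₁.1 * u₁.2.1⁻¹) ^ (q + 1) = 0 := by
          rw [← hfg, hgz, zero_pow hq0, add_zero]
        exact hf0 ((pow_eq_zero_iff (show q + 1 ≠ 0 by omega)).mp hfz)
      have hh0 : lam ^ (q * p ^ (i * r)) * lam ^ (q * p ^ (0 * r)) * u₁.2.1 * c⁻¹ ≠ 0 :=
        mul_ne_zero (mul_ne_zero (mul_ne_zero hmu0 hmu00) hb1) (inv_ne_zero hc0)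
      have hscal : lam ^ (q * p ^ (i * r)) * lam ^ (q * p ^ (0 * r)) * c⁻¹ ≠ 0 :=
        mul_ne_zero (mul_ne_zero hmu0 hmu00) (inv_ne_zero hc0)
      refine ⟨0, hk, u₁.1 * u₁.2.1⁻¹, u₁.2.2 * u₁.2.1⁻¹,
        lam ^ (q * p ^ (i * r)) * lam ^ (q * p ^ (0 * r)) * u₁.2.1 * c⁻¹,
        hf0, hg0, hh0, hfg, ?_, ?_⟩
      · rw [h1span]
        have hvec : ((u₁.1 * u₁.2.1⁻¹) * (lam ^ (q * p ^ (i * r)) * lam ^ (q * p ^ (0 * r)) * u₁.2.1 * c⁻¹),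
            lam ^ (q * p ^ (i * r)) * lam ^ (q * p ^ (0 * r)) * u₁.2.1 * c⁻¹,
            (u₁.2.2 * u₁.2.1⁻¹) * (lam ^ (q * p ^ (i * r)) * lam ^ (q * p ^ (0 * r)) * u₁.2.1 * c⁻¹)) =
            (lam ^ (q * p ^ (i * r)) * lam ^ (q * p ^ (0 * r)) * c⁻¹) • u₁ := by
          refine Prod.ext_iff.mpr ⟨?_, Prod.ext_iff.mpr ⟨?_, ?_⟩⟩
          · rw [smul_fst]; field_simp
          · rw [smul_snd_fst]; field_simp
          · rw [smul_snd_snd]; field_simp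
        rw [hvec, Submodule.span_singleton_smul_eq (IsUnit.mk0 _ hscal) u₁]
      · rw [hL1, detLine_eq_eqnLine]
        refine eqnLine_eq_of (u₁.2.1 * c * (lam ^ (q * p ^ (0 * r)))⁻¹)
          (mul_ne_zero (mul_ne_zero hb1 hc0) (inv_ne_zero hmu00)) ?_ ?_ ?_
        · simp only [Prod.fst_add, Prod.snd_add, hb0, mul_zero, add_zero, zero_add]
          rw [mul_pow, inv_pow]
          field_simp
          linear_combination (u₁.2.1 ^ 2) * hR1
            + (u₁.2.1 ^ 2 * u₁.1 ^ q) * hsum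
        · simp only [Prod.fst_add, Prod.snd_add, hb0, mul_zero, add_zero, zero_add]
          rw [mul_pow, inv_pow]
          field_simp
          linear_combination ((u₁.2.2 * u₁.2.1 ^ q - u₁.1 * u₁.1 ^ q)) * hsum
            - (u₁.1) * hR1
            - (lam ^ (q * p ^ (i * r)) * u₁.1) * hR2
        · simp only [Prod.fst_add, Prod.snd_add, hb0, mul_zero, add_zero, zero_add]
          field_simp
          linear_combination (-(u₁.2.1)) * hsum
  · rintro ⟨i, hik, f, g, h, hf, hg, hh, hfg, hpt, hline⟩
    have hfh : f * h ≠ 0 := mul_ne_zero hf hh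
    set mu : F := lam ^ (q * p ^ (i * r)) with hmudef
    constructor
    · -- vL ≠ w
      intro heq
      have h11 : vL.1.1 = w.1.1 := by rw [heq]
      rw [hvP, hpt] at h11
      obtain ⟨s, hs0, hveq⟩ := span_eq_imp (x := ((0:F),0,1)) (v := (f*h, h, g*h)) (by simp [Prod.mk_eq_zero]; tauto) h11
      have := congrArg (fun t => t.2.1) hveq
      simp [smul_snd_fst] at this
      exact hh this
    refine Or.inl ⟨i, lt_of_lt_of_le hik hkle, ((0:F),0,1), (f*h, h, g*h),
      (-(f*h), 0, -(f^(q+1)*h)), ?_, ?_, ?_, ?_, ?_, hpt, ?_, ?_, ?_, ?_, ?_⟩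
    · simp [Prod.mk_eq_zero]
    · simp [Isotropic, beta, zero_pow hq0]
    · rw [hvP]; rfl
    · simp [Prod.mk_eq_zero]; tauto
    · -- isotropic u₂
      simp only [Isotropic, beta, mul_pow]
      linear_combination h * h ^ q * hfg
    · -- u₀ not isotropic
      intro hcon
      simp only [Isotropic, beta] at hcon
      simp [zero_pow hq0, mul_eq_zero, pow_eq_zero_iff hq0, neg_eq_zero] at hcon
      tauto
    · -- beta u₀ u₁ = 0
      simp [beta, zero_pow hq0]
    · -- beta u₀ u₂ = 0
      simp only [beta, mul_pow]
      ring_nf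
    · -- vL.1.2 = detLine
      rw [hvLine, lineLstar_eq_eqnLine, detLine_eq_eqnLine]
      refine (eqnLine_eq_of (-h) (neg_ne_zero.mpr hh) ?_ ?_ ?_).symm
      · show (0:F) * _ - 1 * _ = -h * 1
        simp [Prod.mk_add_mk]
      · show (1:F) * _ - 0 * _ = -h * 0
        simp [Prod.mk_add_mk]
      · show (0:F) * _ - 0 * _ = -h * 0
        simp [Prod.mk_add_mk]
    · -- w.1.2 = detLine
      rw [hline, detLine_eq_eqnLine]
      refine (eqnLine_eq_of h hh ?_ ?_ ?_).symm
      · show h * _ - g * h * _ = h * _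
        simp only [Prod.mk_add_mk, Prod.smul_mk, smul_eq_mul]
        ring_nf
        rw [hmudef]
      · show g * h * _ - f * h * _ = h * _
        simp only [Prod.mk_add_mk, Prod.smul_mk, smul_eq_mul]
        linear_combination (-(f * h ^ 2)) * hfg
      · show f * h * _ - h * _ = h * (f * h)
        simp only [Prod.mk_add_mk, Prod.smul_mk, smul_eq_mul]
        ring


end UnitaryGraphPaper
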